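/- Let G be a finite multigraph with maximum degree at most Δ, and let x, y be vertices at distance t. Then n_G(x,y) ≤ 2 · (Δ/2)^t, where n_G(x,y) is the number of shortest x–y paths. -/

import Mathlib

/-- A multigraph on vertex type `V` with edge type `E`: each edge has an
unordered pair of endpoints (parallel edges and loops are allowed). -/
structure Multigraph (V : Type) (E : Type) where
  ends : E → Sym2 V

namespace Multigraph

variable {V E : Type}

/-- A walk of length `n` from `x` to `y` in a multigraph, recorded by its
sequence of vertices and edges. -/
@[ext]
structure Walk (G : Multigraph V E) (x y : V) (n : ℕ) where
  vert : Fin (n + 1) → V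
  edge : Fin n → E
  vert_zero : vert 0 = x
  vert_last : vert (Fin.last n) = y
  ends_eq : ∀ i : Fin n, G.ends (edge i) = s(vert i.castSucc, vert i.succ)

/-- The graph distance between two vertices (junk value `0` by `sInf` of `∅`
if they are not connected). -/
noncomputable def dist (G : Multigraph V E) (x y : V) : ℕ :=
  sInf {n | Nonempty (G.Walk x y n)}

/-- The degree of a vertex: the number of edges incident to it. -/
noncomputable def degree (G : Multigraph V E) (v : V) : ℕ :=
  Nat.card {e : E // v ∈ G.ends e}

/-- The number of shortest paths between `x` and `y`: the number of walks
whose length is the distance (such walks are automatically paths). -/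
noncomputable def numShortestPaths (G : Multigraph V E) (x y : V) : ℕ :=
  Nat.card (G.Walk x y (G.dist x y))

/-- Distance from a vertex to an edge: the least distance to an endpoint. -/
noncomputable def distToEdge (G : Multigraph V E) (x : V) (e : E) : ℕ :=
  sInf {d | ∃ v ∈ G.ends e, G.dist x v = d}

noncomputable instance {G : Multigraph V E} {x y : V} {n : ℕ} [Fintype V] [Fintype E] :
    Fintype (G.Walk x y n) := by
  classical
  exact Fintype.ofInjective (fun w => (w.vert, w.edge)) (fun a b h => by
    cases a; cases b; simp_all)

end Multigraph

namespace Multigraph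

variable {V E : Type}

/-- length-0 walk -/
def Walk.nil (G : Multigraph V E) (x : V) : G.Walk x x 0 where
  vert _ := x
  edge := Fin.elim0
  vert_zero := rfl
  vert_last := rfl
  ends_eq i := i.elim0

theorem Walk.end_eq_start {G : Multigraph V E} {x y : V} (w : G.Walk x y 0) : y = x := by
  have h : w.vert (Fin.last 0) = w.vert 0 := congrArg w.vert (Fin.ext (by omega))
  rw [w.vert_last, w.vert_zero] at h
  exact h

instance {G : Multigraph V E} {x y : V} : Subsingleton (G.Walk x y 0) :=
  ⟨fun a b => by
    ext i
    · rw [show i = 0 from Fin.ext (by omega), a.vert_zero, b.vert_zero]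
    · exact i.elim0⟩

def Walk.reverse {G : Multigraph V E} {x y : V} {n : ℕ} (w : G.Walk x y n) : G.Walk y x n where
  vert i := w.vert i.rev
  edge i := w.edge i.rev
  vert_zero := by simp [Fin.rev_zero, w.vert_last]
  vert_last := by simp [Fin.rev_last, w.vert_zero]
  ends_eq i := by
    show G.ends (w.edge i.rev) = s(w.vert i.castSucc.rev, w.vert i.succ.rev)
    rw [w.ends_eq i.rev, Fin.rev_castSucc, Fin.rev_succ]
    exact Sym2.eq_swap

theorem Walk.reverse_reverse {G : Multigraph V E} {x y : V} {n : ℕ} (w : G.Walk x y n) :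
    w.reverse.reverse = w := by
  ext i
  · show w.vert i.rev.rev = w.vert i; rw [Fin.rev_rev]
  · show w.edge i.rev.rev = w.edge i; rw [Fin.rev_rev]

def revEquiv (G : Multigraph V E) (x y : V) (n : ℕ) : G.Walk x y n ≃ G.Walk y x n :=
  ⟨Walk.reverse, Walk.reverse, Walk.reverse_reverse, Walk.reverse_reverse⟩

def Walk.snoc {G : Multigraph V E} {x u : V} {n : ℕ} (w : G.Walk x u n) (e : E) {v : V}
    (h : G.ends e = s(u, v)) : G.Walk x v (n + 1) where
  vert := Fin.snoc w.vert v
  edge := Fin.snoc w.edge e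
  vert_zero := by
    rw [show (0 : Fin (n + 2)) = Fin.castSucc 0 from (Fin.castSucc_zero).symm,
      Fin.snoc_castSucc, w.vert_zero]
  vert_last := Fin.snoc_last _ _
  ends_eq i := by
    induction i using Fin.lastCases with
    | last =>
      rw [Fin.snoc_last, Fin.succ_last, Fin.snoc_last, Fin.snoc_castSucc, w.vert_last, h]
    | cast j =>
      rw [Fin.snoc_castSucc, Fin.succ_castSucc, Fin.snoc_castSucc, Fin.snoc_castSucc,
        w.ends_eq j]

def Walk.init {G : Multigraph V E} {x v : V} {n : ℕ} (w : G.Walk x v (n + 1)) :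
    G.Walk x (w.vert (Fin.last n).castSucc) n where
  vert j := w.vert j.castSucc
  edge j := w.edge j.castSucc
  vert_zero := by
    show w.vert (Fin.castSucc 0) = x
    rw [Fin.castSucc_zero, w.vert_zero]
  vert_last := rfl
  ends_eq j := by
    show G.ends (w.edge j.castSucc) = s(w.vert j.castSucc.castSucc, w.vert j.succ.castSucc)
    rw [w.ends_eq j.castSucc, Fin.succ_castSucc]

def snocFun (G : Multigraph V E) (z v : V) (n : ℕ) :
    (Σ u : V, {e : E // G.ends e = s(u, v)} × G.Walk z u n) → G.Walk z v (n + 1) :=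
  fun p => p.2.2.snoc p.2.1.1 p.2.1.2

theorem snocFun_bijective (G : Multigraph V E) (z v : V) (n : ℕ) :
    Function.Bijective (snocFun G z v n) := by
  constructor
  · rintro ⟨u, ⟨e, he⟩, w⟩ ⟨u', ⟨e', he'⟩, w'⟩ hpq
    have hv : ∀ i, (snocFun G z v n ⟨u, ⟨e, he⟩, w⟩).vert i
        = (snocFun G z v n ⟨u', ⟨e', he'⟩, w'⟩).vert i := fun i => by rw [hpq]
    have hed : ∀ i, (snocFun G z v n ⟨u, ⟨e, he⟩, w⟩).edge i
        = (snocFun G z v n ⟨u', ⟨e', he'⟩, w'⟩).edge i := fun i => by rw [hpq]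
    have hu : u = u' := by
      have h1 := hv (Fin.last n).castSucc
      show _ = _
      rw [← w.vert_last, ← w'.vert_last]
      simpa [snocFun, Walk.snoc, Fin.snoc_castSucc] using h1
    subst hu
    have hee : e = e' := by
      have h2 := hed (Fin.last n)
      simpa [snocFun, Walk.snoc, Fin.snoc_last] using h2
    subst hee
    have hw : w = w' := by
      ext i
      · have := hv i.castSucc
        simpa [snocFun, Walk.snoc, Fin.snoc_castSucc] using this
      · have := hed i.castSucc
        simpa [snocFun, Walk.snoc, Fin.snoc_castSucc] using this
    rw [hw]
  · intro w
    refine ⟨⟨w.vert (Fin.last n).castSucc, ⟨w.edge (Fin.last n), ?_⟩, w.init⟩, ?_⟩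
    · rw [w.ends_eq (Fin.last n), Fin.succ_last, w.vert_last]
    · ext i
      · induction i using Fin.lastCases with
        | last =>
          simp only [snocFun, Walk.snoc]
          rw [Fin.snoc_last, w.vert_last]
        | cast j =>
          simp only [snocFun, Walk.snoc]
          rw [Fin.snoc_castSucc]
          rfl
      · induction i using Fin.lastCases with
        | last =>
          simp only [snocFun, Walk.snoc]
          rw [Fin.snoc_last]
        | cast j =>
          simp only [snocFun, Walk.snoc]
          rw [Fin.snoc_castSucc]
          rfl

noncomputable def snocEquiv (G : Multigraph V E) (z v : V) (n : ℕ) :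
    (Σ u : V, {e : E // G.ends e = s(u, v)} × G.Walk z u n) ≃ G.Walk z v (n + 1) :=
  Equiv.ofBijective _ (snocFun_bijective G z v n)

theorem dist_self (G : Multigraph V E) (x : V) : G.dist x x = 0 :=
  Nat.sInf_eq_zero.mpr (Or.inl ⟨Walk.nil G x⟩)

theorem dist_le {G : Multigraph V E} {x y : V} {n : ℕ} (w : G.Walk x y n) : G.dist x y ≤ n :=
  Nat.sInf_le ⟨w⟩

theorem exists_walk_dist {G : Multigraph V E} {x y : V} {n : ℕ} (w : G.Walk x y n) :
    Nonempty (G.Walk x y (G.dist x y)) :=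
  Nat.sInf_mem (⟨n, ⟨w⟩⟩ : Set.Nonempty {n | Nonempty (G.Walk x y n)})

theorem dist_comm (G : Multigraph V E) (x y : V) : G.dist x y = G.dist y x := by
  unfold dist
  congr 1
  ext n
  exact ⟨fun ⟨w⟩ => ⟨w.reverse⟩, fun ⟨w⟩ => ⟨w.reverse⟩⟩

theorem dist_adj (G : Multigraph V E) (x : V) {e : E} {u w : V} (h : G.ends e = s(u, w)) :
    G.dist x w ≤ G.dist x u + 1 := by
  rcases Set.eq_empty_or_nonempty {n | Nonempty (G.Walk x u n)} with hS | hS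
  · have hw : G.dist x w = 0 := by
      have : {n | Nonempty (G.Walk x w n)} = ∅ := by
        rw [Set.eq_empty_iff_forall_notMem] at hS ⊢
        rintro n ⟨ww⟩
        exact hS (n + 1) ⟨ww.snoc e (by rw [h, Sym2.eq_swap])⟩
      unfold dist
      rw [this, Nat.sInf_empty]
    omega
  · obtain ⟨wu⟩ : Nonempty (G.Walk x u (G.dist x u)) := Nat.sInf_mem hS
    exact dist_le (wu.snoc e h)

theorem vert_le_of_hadj {G : Multigraph V E} (L : V → ℤ)
    (Hadj : ∀ (e : E) (u w : V), G.ends e = s(u, w) → L w ≤ L u + 1)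
    {z v : V} {n : ℕ} (w : G.Walk z v n) :
    ∀ m : ℕ, ∀ hm : m ≤ n, L (w.vert ⟨m, Nat.lt_succ_of_le hm⟩) ≤ L (w.vert 0) + m := by
  intro m
  induction m with
  | zero =>
    intro hm
    have : (⟨0, Nat.lt_succ_of_le hm⟩ : Fin (n + 1)) = 0 := Fin.ext rfl
    rw [this]
    simp
  | succ k ih =>
    intro hm
    have hk : k ≤ n := by omega
    have hkn : k < n := by omega
    have step := Hadj (w.edge ⟨k, hkn⟩) _ _ (w.ends_eq ⟨k, hkn⟩)
    have e1 : (⟨k, hkn⟩ : Fin n).succ = ⟨k + 1, Nat.lt_succ_of_le hm⟩ := Fin.ext rfl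
    have e2 : (⟨k, hkn⟩ : Fin n).castSucc = ⟨k, Nat.lt_succ_of_le hk⟩ := Fin.ext rfl
    rw [e1, e2] at step
    have ihk := ih hk
    push_cast
    omega

theorem layer {G : Multigraph V E} (L : V → ℤ)
    (Hadj : ∀ (e : E) (u w : V), G.ends e = s(u, w) → L w ≤ L u + 1)
    {z v : V} {n : ℕ} (hz : L z = 0) (hv : L v = n) (w : G.Walk z v n) (j : Fin (n + 1)) :
    L (w.vert j) = j.val := by
  have h1 : L (w.vert j) ≤ L (w.vert 0) + j.val := by
    have := vert_le_of_hadj L Hadj w j.val (Nat.lt_succ_iff.mp j.isLt)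
    rwa [show (⟨j.val, Nat.lt_succ_of_le (Nat.lt_succ_iff.mp j.isLt)⟩ : Fin (n+1)) = j
      from Fin.ext rfl] at this
  rw [w.vert_zero, hz] at h1
  have Hadj' : ∀ (e : E) (a b : V), G.ends e = s(a, b) →
      ((n : ℤ) - L b) ≤ ((n : ℤ) - L a) + 1 := by
    intro e a b h
    have := Hadj e b a (by rw [h]; exact Sym2.eq_swap)
    omega
  have h2 := vert_le_of_hadj (fun v => (n : ℤ) - L v) Hadj' w.reverse j.rev.val
    (Nat.lt_succ_iff.mp j.rev.isLt)
  rw [show (⟨j.rev.val, Nat.lt_succ_of_le (Nat.lt_succ_iff.mp j.rev.isLt)⟩ : Fin (n+1)) = j.rev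
    from Fin.ext rfl] at h2
  have hrv : w.reverse.vert j.rev = w.vert j := by
    show w.vert j.rev.rev = w.vert j
    rw [Fin.rev_rev]
  have hr0 : w.reverse.vert 0 = v := w.reverse.vert_zero
  rw [hrv, hr0, hv] at h2
  have hjv : (j.rev.val : ℤ) = (n : ℤ) - j.val := by
    have h3 : j.rev.val = n + 1 - (j.val + 1) := Fin.val_rev j
    have := j.isLt
    omega
  omega

/-- number of edges from `v` going "one level up" w.r.t. level function `L`. -/
noncomputable def outC (G : Multigraph V E) (L : V → ℤ) (v : V) : ℕ :=
  Nat.card {e : E // ∃ w, G.ends e = s(v, w) ∧ L w = L v + 1}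

/-- edge multiplicity between two vertices -/
noncomputable def mcnt (G : Multigraph V E) (u v : V) : ℕ :=
  Nat.card {e : E // G.ends e = s(u, v)}

noncomputable def wt (F : V → ℕ) (n : ℕ) (f : Fin (n + 1) → V) : ℝ :=
  ∏ i : Fin n, ((F (f i.castSucc) : ℝ))⁻¹

theorem wt_nonneg (F : V → ℕ) (n : ℕ) (f : Fin (n + 1) → V) : 0 ≤ wt F n f :=
  Finset.prod_nonneg fun i _ => by positivity

theorem snoc_vert_castSucc {G : Multigraph V E} {x u v : V} {n : ℕ} (w : G.Walk x u n)
    (e : E) (h : G.ends e = s(u, v)) (i : Fin (n + 1)) :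
    (w.snoc e h).vert i.castSucc = w.vert i := by
  simp [Walk.snoc]

theorem wt_snoc (F : V → ℕ) {G : Multigraph V E} {x u v : V} {n : ℕ} (w : G.Walk x u n)
    (e : E) (h : G.ends e = s(u, v)) :
    wt F (n + 1) (w.snoc e h).vert = wt F n w.vert * ((F u : ℝ))⁻¹ := by
  rw [wt, wt, Fin.prod_univ_castSucc
    (f := fun i : Fin (n + 1) => ((F ((w.snoc e h).vert i.castSucc) : ℝ))⁻¹)]
  simp only [snoc_vert_castSucc, w.vert_last]

theorem sum_mcnt_le [Fintype V] [Fintype E] (G : Multigraph V E) (L : V → ℤ) (u : V) (n : ℕ)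
    (hu : L u = (n : ℤ)) :
    ∑ v ∈ Finset.univ.filter (fun v => L v = ((n + 1 : ℕ) : ℤ)), G.mcnt u v ≤ G.outC L u := by
  classical
  have h1 : ∑ v ∈ Finset.univ.filter (fun v : V => L v = ((n + 1 : ℕ) : ℤ)), G.mcnt u v
      = Nat.card (Σ v : {v // v ∈ Finset.univ.filter (fun v : V => L v = ((n + 1 : ℕ) : ℤ))},
          {e : E // G.ends e = s(u, v.1)}) := by
    rw [Nat.card_eq_fintype_card, Fintype.card_sigma,
      ← Finset.sum_coe_sort (Finset.univ.filter (fun v : V => L v = ((n + 1 : ℕ) : ℤ)))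
        (fun v => G.mcnt u v)]
    exact Finset.sum_congr rfl fun v _ => by rw [mcnt, Nat.card_eq_fintype_card]
  rw [h1, outC]
  refine Nat.card_le_card_of_injective
    (fun p => ⟨p.2.1, ⟨p.1.1, p.2.2, by
      have h4 := (Finset.mem_filter.mp p.1.2).2
      push_cast at h4
      omega⟩⟩) ?_
  rintro ⟨⟨a, ha⟩, ⟨e, he⟩⟩ ⟨⟨b, hb⟩, ⟨f, hf⟩⟩ hpq
  simp only [Subtype.mk.injEq] at hpq
  subst hpq
  have hab : a = b := by
    have h2 : s(u, a) = s(u, b) := by rw [← he, ← hf]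
    rcases (Sym2.mk_eq_mk_iff (p := (u, a)) (q := (u, b))).mp h2 with h3 | h3
    · exact congrArg Prod.snd h3
    · have ha2 : a = u := congrArg Prod.snd h3
      exfalso
      have h5 := (Finset.mem_filter.mp ha).2
      rw [ha2, hu] at h5
      push_cast at h5
      omega
  subst hab
  rfl

theorem flow [Fintype V] [Fintype E] (G : Multigraph V E) (L : V → ℤ)
    (Hadj : ∀ (e : E) (u w : V), G.ends e = s(u, w) → L w ≤ L u + 1)
    (z : V) (hz : L z = 0) (n : ℕ) :
    ∑ v ∈ Finset.univ.filter (fun v => L v = (n : ℤ)),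
      (∑ w : G.Walk z v n, wt (G.outC L) n w.vert) ≤ 1 := by
  classical
  induction n with
  | zero =>
    have hb : ∀ v : V, (∑ w : G.Walk z v 0, wt (G.outC L) 0 w.vert)
        ≤ if v = z then 1 else 0 := by
      intro v
      have hsum : (∑ w : G.Walk z v 0, wt (G.outC L) 0 w.vert)
          = (Fintype.card (G.Walk z v 0) : ℝ) := by
        simp [wt]
      rw [hsum]
      by_cases hvz : v = z
      · rw [if_pos hvz]
        have h1 : Fintype.card (G.Walk z v 0) ≤ 1 :=
          Fintype.card_le_one_iff_subsingleton.mpr inferInstance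
        exact_mod_cast h1
      · rw [if_neg hvz]
        have h1 : Fintype.card (G.Walk z v 0) = 0 :=
          Fintype.card_eq_zero_iff.mpr ⟨fun w => hvz w.end_eq_start⟩
        rw [h1]
        norm_num
    calc ∑ v ∈ Finset.univ.filter (fun v => L v = ((0 : ℕ) : ℤ)),
          (∑ w : G.Walk z v 0, wt (G.outC L) 0 w.vert)
        ≤ ∑ v ∈ Finset.univ.filter (fun v => L v = ((0 : ℕ) : ℤ)),
            (if v = z then (1 : ℝ) else 0) := Finset.sum_le_sum fun v _ => hb v
      _ ≤ ∑ v : V, (if v = z then (1 : ℝ) else 0) :=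
          Finset.sum_le_sum_of_subset_of_nonneg (Finset.filter_subset _ _)
            (fun v _ _ => by split_ifs <;> norm_num)
      _ = 1 := by rw [Finset.sum_ite_eq' Finset.univ z (fun _ => (1 : ℝ))]; simp
  | succ n ih =>
    have key : ∀ v : V,
        (∑ w : G.Walk z v (n + 1), wt (G.outC L) (n + 1) w.vert)
        = ∑ u : V, (G.mcnt u v : ℝ) *
            ((G.outC L u : ℝ)⁻¹ * ∑ w' : G.Walk z u n, wt (G.outC L) n w'.vert) := by
      intro v
      rw [← Equiv.sum_comp (snocEquiv G z v n) (fun w => wt (G.outC L) (n + 1) w.vert),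
        ← Finset.univ_sigma_univ, Finset.sum_sigma]
      refine Finset.sum_congr rfl fun u _ => ?_
      rw [Fintype.sum_prod_type]
      have hterm : ∀ (e : {e : E // G.ends e = s(u, v)}) (w' : G.Walk z u n),
          wt (G.outC L) (n + 1) ((snocEquiv G z v n) ⟨u, (e, w')⟩).vert
          = wt (G.outC L) n w'.vert * (G.outC L u : ℝ)⁻¹ := fun e w' =>
        wt_snoc (G.outC L) w' e.1 e.2
      calc ∑ e : {e : E // G.ends e = s(u, v)}, ∑ w' : G.Walk z u n,
            wt (G.outC L) (n + 1) ((snocEquiv G z v n) ⟨u, (e, w')⟩).vert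
          = ∑ _e : {e : E // G.ends e = s(u, v)}, ∑ w' : G.Walk z u n,
            wt (G.outC L) n w'.vert * (G.outC L u : ℝ)⁻¹ :=
            Finset.sum_congr rfl fun e _ => Finset.sum_congr rfl fun w' _ => hterm e w'
        _ = (Fintype.card {e : E // G.ends e = s(u, v)} : ℝ) *
            (∑ w' : G.Walk z u n, wt (G.outC L) n w'.vert * (G.outC L u : ℝ)⁻¹) := by
            rw [Finset.sum_const, Finset.card_univ, nsmul_eq_mul]
        _ = (G.mcnt u v : ℝ) *
            ((G.outC L u : ℝ)⁻¹ * ∑ w' : G.Walk z u n, wt (G.outC L) n w'.vert) := by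
            rw [mcnt, Nat.card_eq_fintype_card, ← Finset.sum_mul]
            ring
    have hTnonneg : ∀ u : V, 0 ≤ ∑ w' : G.Walk z u n, wt (G.outC L) n w'.vert :=
      fun u => Finset.sum_nonneg fun w' _ => wt_nonneg _ _ _
    calc ∑ v ∈ Finset.univ.filter (fun v => L v = ((n + 1 : ℕ) : ℤ)),
          (∑ w : G.Walk z v (n + 1), wt (G.outC L) (n + 1) w.vert)
        = ∑ v ∈ Finset.univ.filter (fun v => L v = ((n + 1 : ℕ) : ℤ)), ∑ u : V,
            (G.mcnt u v : ℝ) *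
            ((G.outC L u : ℝ)⁻¹ * ∑ w' : G.Walk z u n, wt (G.outC L) n w'.vert) :=
          Finset.sum_congr rfl fun v _ => key v
      _ = ∑ u : V, ∑ v ∈ Finset.univ.filter (fun v => L v = ((n + 1 : ℕ) : ℤ)),
            (G.mcnt u v : ℝ) *
            ((G.outC L u : ℝ)⁻¹ * ∑ w' : G.Walk z u n, wt (G.outC L) n w'.vert) :=
          Finset.sum_comm
      _ = ∑ u : V, (∑ v ∈ Finset.univ.filter (fun v => L v = ((n + 1 : ℕ) : ℤ)),
            (G.mcnt u v : ℝ)) *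
            ((G.outC L u : ℝ)⁻¹ * ∑ w' : G.Walk z u n, wt (G.outC L) n w'.vert) :=
          Finset.sum_congr rfl fun u _ => (Finset.sum_mul _ _ _).symm
      _ ≤ ∑ u : V, (if L u = (n : ℤ)
            then ∑ w' : G.Walk z u n, wt (G.outC L) n w'.vert else 0) := by
          refine Finset.sum_le_sum fun u _ => ?_
          by_cases hLu : L u = (n : ℤ)
          · rw [if_pos hLu]
            by_cases hF : G.outC L u = 0
            · have hm0 : ∀ v ∈ Finset.univ.filter (fun v => L v = ((n + 1 : ℕ) : ℤ)),
                  (G.mcnt u v : ℝ) = 0 := by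
                intro v hv
                have := sum_mcnt_le G L u n hLu
                rw [hF] at this
                have hz2 : G.mcnt u v = 0 := by
                  have := Finset.sum_le_sum_of_subset (Finset.singleton_subset_iff.mpr hv)
                    (f := fun v => G.mcnt u v)
                  simp only [Finset.sum_singleton] at this
                  omega
                rw [hz2, Nat.cast_zero]
              rw [Finset.sum_eq_zero hm0, zero_mul]
              exact hTnonneg u
            · have hA : (∑ v ∈ Finset.univ.filter (fun v => L v = ((n + 1 : ℕ) : ℤ)),
                  (G.mcnt u v : ℝ)) ≤ (G.outC L u : ℝ) := by
                rw [← Nat.cast_sum]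
                exact_mod_cast sum_mcnt_le G L u n hLu
              have hApos : 0 ≤ ∑ v ∈ Finset.univ.filter (fun v => L v = ((n + 1 : ℕ) : ℤ)),
                  (G.mcnt u v : ℝ) := Finset.sum_nonneg fun v _ => by positivity
              have hFpos : (0 : ℝ) < (G.outC L u : ℝ) := by
                have : 0 < G.outC L u := Nat.pos_of_ne_zero hF
                exact_mod_cast this
              have h1 : (∑ v ∈ Finset.univ.filter (fun v => L v = ((n + 1 : ℕ) : ℤ)),
                  (G.mcnt u v : ℝ)) * (G.outC L u : ℝ)⁻¹ ≤ 1 := by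
                rw [← div_eq_mul_inv]
                exact (div_le_one hFpos).mpr hA
              calc (∑ v ∈ Finset.univ.filter (fun v => L v = ((n + 1 : ℕ) : ℤ)),
                    (G.mcnt u v : ℝ)) *
                    ((G.outC L u : ℝ)⁻¹ * ∑ w' : G.Walk z u n, wt (G.outC L) n w'.vert)
                  = ((∑ v ∈ Finset.univ.filter (fun v => L v = ((n + 1 : ℕ) : ℤ)),
                    (G.mcnt u v : ℝ)) * (G.outC L u : ℝ)⁻¹) *
                    (∑ w' : G.Walk z u n, wt (G.outC L) n w'.vert) := by ring
                _ ≤ 1 * (∑ w' : G.Walk z u n, wt (G.outC L) n w'.vert) :=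
                    mul_le_mul_of_nonneg_right h1 (hTnonneg u)
                _ = _ := one_mul _
          · rw [if_neg hLu]
            by_cases hT : Nonempty (G.Walk z u n)
            · have hm0 : ∀ v ∈ Finset.univ.filter (fun v => L v = ((n + 1 : ℕ) : ℤ)),
                  (G.mcnt u v : ℝ) = 0 := by
                intro v hv
                rw [Finset.mem_filter] at hv
                by_contra hm
                have hne : G.mcnt u v ≠ 0 := fun h0 => hm (by rw [h0, Nat.cast_zero])
                obtain ⟨⟨e, he⟩⟩ := (Nat.card_ne_zero.mp hne).1
                obtain ⟨w'⟩ := hT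
                have hlay := layer L Hadj hz hv.2 (w'.snoc e he) (Fin.last n).castSucc
                rw [snoc_vert_castSucc, w'.vert_last] at hlay
                apply hLu
                rw [hlay]
                simp
              rw [Finset.sum_eq_zero hm0, zero_mul]
            · have hT0 : (∑ w' : G.Walk z u n, wt (G.outC L) n w'.vert) = 0 := by
                haveI : IsEmpty (G.Walk z u n) := not_nonempty_iff.mp hT
                rw [Finset.univ_eq_empty, Finset.sum_empty]
              rw [hT0, mul_zero, mul_zero]
      _ = ∑ u ∈ Finset.univ.filter (fun u => L u = (n : ℤ)),
            ∑ w' : G.Walk z u n, wt (G.outC L) n w'.vert := (Finset.sum_filter _ _).symm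
      _ ≤ 1 := ih

theorem mul_le_quarter_sq {a b c : ℕ} (h : a + b ≤ c) :
    (a : ℝ) * (b : ℝ) ≤ ((c : ℝ) / 2) * ((c : ℝ) / 2) := by
  have hc : (a : ℝ) + (b : ℝ) ≤ (c : ℝ) := by exact_mod_cast h
  nlinarith [sq_nonneg ((a : ℝ) - (b : ℝ)), (Nat.cast_nonneg a : (0:ℝ) ≤ a), (Nat.cast_nonneg b : (0:ℝ) ≤ b)]


end Multigraph

open Multigraph in
theorem numShortestPaths_le_two_mul_half_pow_aux {V E : Type} [Fintype V] [Fintype E]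
    (G : Multigraph V E) (Δ : ℕ) (hΔ1 : 1 ≤ Δ) (hΔ : ∀ v : V, G.degree v ≤ Δ)
    (x y : V) (t : ℕ) (ht : G.dist x y = t) :
    (Nat.card (G.Walk x y (G.dist x y)) : ℝ) ≤ 2 * ((Δ : ℝ) / 2) ^ t := by
  classical
  rcases t with _ | s
  · rw [ht]
    have h1 : Nat.card (G.Walk x y 0) ≤ 1 := by
      rw [Nat.card_eq_fintype_card]
      exact Fintype.card_le_one_iff_subsingleton.mpr inferInstance
    have h2 : (Nat.card (G.Walk x y 0) : ℝ) ≤ 1 := by exact_mod_cast h1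
    calc (Nat.card (G.Walk x y 0) : ℝ) ≤ 1 := h2
      _ ≤ 2 * ((Δ : ℝ) / 2) ^ 0 := by norm_num
  · rw [ht, Nat.card_eq_fintype_card]
    set L1 : V → ℤ := fun v => (G.dist x v : ℤ) with hL1
    set L2 : V → ℤ := fun v => ((s + 1 : ℕ) : ℤ) - (G.dist x v : ℤ) with hL2
    have Hadj1 : ∀ (e : E) (u w : V), G.ends e = s(u, w) → L1 w ≤ L1 u + 1 := by
      intro e u w h
      have := G.dist_adj x h
      simp only [hL1]
      push_cast
      omega
    have Hadj2 : ∀ (e : E) (u w : V), G.ends e = s(u, w) → L2 w ≤ L2 u + 1 := by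
      intro e u w h
      have := G.dist_adj x (show G.ends e = s(w, u) by rw [h]; exact Sym2.eq_swap)
      simp only [hL2]
      push_cast
      omega
    have hz1 : L1 x = 0 := by simp [hL1, G.dist_self x]
    have hy1 : L1 y = ((s + 1 : ℕ) : ℤ) := by simp [hL1, ht]
    have hz2 : L2 y = 0 := by simp [hL2, ht]
    have hx2 : L2 x = ((s + 1 : ℕ) : ℤ) := by simp [hL2, G.dist_self x]
    set F : V → ℕ := G.outC L1 with hF
    set B : V → ℕ := G.outC L2 with hB
    -- flow inequalities
    have hflowF : ∑ w : G.Walk x y (s + 1), wt F (s + 1) w.vert ≤ 1 := by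
      refine le_trans ?_ (flow G L1 Hadj1 x hz1 (s + 1))
      refine Finset.single_le_sum (f := fun v => ∑ w : G.Walk x v (s + 1), wt F (s + 1) w.vert)
        (fun v _ => Finset.sum_nonneg fun w _ => wt_nonneg _ _ _) ?_
      exact Finset.mem_filter.mpr ⟨Finset.mem_univ y, hy1⟩
    have hflowB : ∑ w : G.Walk x y (s + 1), wt B (s + 1) w.reverse.vert ≤ 1 := by
      have h0 : ∑ ρ : G.Walk y x (s + 1), wt B (s + 1) ρ.vert ≤ 1 := by
        refine le_trans ?_ (flow G L2 Hadj2 y hz2 (s + 1))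
        refine Finset.single_le_sum (f := fun v => ∑ w : G.Walk y v (s + 1), wt B (s + 1) w.vert)
          (fun v _ => Finset.sum_nonneg fun w _ => wt_nonneg _ _ _) ?_
        exact Finset.mem_filter.mpr ⟨Finset.mem_univ x, hx2⟩
      calc ∑ w : G.Walk x y (s + 1), wt B (s + 1) w.reverse.vert
          = ∑ ρ : G.Walk y x (s + 1), wt B (s + 1) ρ.vert :=
            Equiv.sum_comp (revEquiv G x y (s + 1)) (fun ρ => wt B (s + 1) ρ.vert)
        _ ≤ 1 := h0
    -- per-vertex degree bound
    have hFB : ∀ v : V, F v + B v ≤ Δ := by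
      intro v
      have hdisj : ∀ e : E, (∃ u, G.ends e = s(v, u) ∧ L1 u = L1 v + 1) →
          (∃ u, G.ends e = s(v, u) ∧ L2 u = L2 v + 1) → False := by
        rintro e ⟨w1, h1, e1⟩ ⟨w2, h2, e2⟩
        have h3 : s(v, w1) = s(v, w2) := by rw [← h1, ← h2]
        simp only [hL1, hL2] at e1 e2
        rcases (Sym2.mk_eq_mk_iff (p := (v, w1)) (q := (v, w2))).mp h3 with h4 | h4
        · have h5 : w1 = w2 := congrArg Prod.snd h4
          rw [h5] at e1
          omega
        · have hv2 : v = w2 := congrArg Prod.fst h4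
          rw [← hv2] at e2
          omega
      have hsum : F v + B v = Nat.card
          ({e : E // ∃ u, G.ends e = s(v, u) ∧ L1 u = L1 v + 1} ⊕
           {e : E // ∃ u, G.ends e = s(v, u) ∧ L2 u = L2 v + 1}) := by
        rw [Nat.card_sum, hF, hB, outC, outC]
      rw [hsum]
      refine le_trans (Nat.card_le_card_of_injective (fun p => (Sum.elim
        (fun q : {e : E // ∃ u, G.ends e = s(v, u) ∧ L1 u = L1 v + 1} =>
          (⟨q.1, by obtain ⟨w1, h1, _⟩ := q.2; rw [h1]; exact Sym2.mem_mk_left _ _⟩ :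
            {e : E // v ∈ G.ends e}))
        (fun q : {e : E // ∃ u, G.ends e = s(v, u) ∧ L2 u = L2 v + 1} =>
          (⟨q.1, by obtain ⟨w1, h1, _⟩ := q.2; rw [h1]; exact Sym2.mem_mk_left _ _⟩ :
            {e : E // v ∈ G.ends e})) p)) ?_) (hΔ v)
      rintro (⟨e1, he1⟩ | ⟨e1, he1⟩) (⟨e2, he2⟩ | ⟨e2, he2⟩) hpq <;>
        simp only [Sum.elim_inl, Sum.elim_inr, Subtype.mk.injEq] at hpq
      · subst hpq; rfl
      · exact absurd (hdisj e1 he1 (hpq ▸ he2)) (fun h => h)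
      · exact absurd (hdisj e1 (hpq ▸ he2) he1) (fun h => h)
      · subst hpq; rfl
    -- layers along a shortest walk
    have hlay : ∀ (w : G.Walk x y (s + 1)) (j : Fin (s + 2)),
        L1 (w.vert j) = (j.val : ℤ) := fun w j => layer L1 Hadj1 hz1 hy1 w j
    have hF1 : ∀ (w : G.Walk x y (s + 1)) (i : Fin (s + 1)), 1 ≤ F (w.vert i.castSucc) := by
      intro w i
      have hne : Nonempty {e : E // ∃ u, G.ends e = s(w.vert i.castSucc, u) ∧
          L1 u = L1 (w.vert i.castSucc) + 1} := by
        refine ⟨⟨w.edge i, ⟨w.vert i.succ, w.ends_eq i, ?_⟩⟩⟩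
        rw [hlay w i.castSucc, hlay w i.succ]
        have hsv : i.succ.val = i.val + 1 := rfl
        have hcv : i.castSucc.val = i.val := rfl
        rw [hsv, hcv]
        push_cast
        ring
      rw [hF, outC]
      exact Nat.one_le_iff_ne_zero.mpr (Nat.card_ne_zero.mpr ⟨hne, Subtype.finite⟩)
    have hB1 : ∀ (w : G.Walk x y (s + 1)) (i : Fin (s + 1)), 1 ≤ B (w.vert i.succ) := by
      intro w i
      have hne : Nonempty {e : E // ∃ u, G.ends e = s(w.vert i.succ, u) ∧
          L2 u = L2 (w.vert i.succ) + 1} := by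
        refine ⟨⟨w.edge i, ⟨w.vert i.castSucc, ?_, ?_⟩⟩⟩
        · rw [w.ends_eq i]; exact Sym2.eq_swap
        · have ha := hlay w i.castSucc
          have hb := hlay w i.succ
          simp only [hL1] at ha hb
          simp only [hL2]
          rw [ha, hb]
          have hsv : i.succ.val = i.val + 1 := rfl
          have hcv : i.castSucc.val = i.val := rfl
          rw [hsv, hcv]
          push_cast
          ring
      rw [hB, outC]
      exact Nat.one_le_iff_ne_zero.mpr (Nat.card_ne_zero.mpr ⟨hne, Subtype.finite⟩)
    -- rewriting the weights as inverses of products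
    have hwtF : ∀ w : G.Walk x y (s + 1),
        wt F (s + 1) w.vert = (∏ i : Fin (s + 1), (F (w.vert i.castSucc) : ℝ))⁻¹ :=
      fun w => by rw [wt, Finset.prod_inv_distrib]
    have hrevwt : ∀ w : G.Walk x y (s + 1),
        wt B (s + 1) w.reverse.vert = (∏ i : Fin (s + 1), (B (w.vert i.succ) : ℝ))⁻¹ := by
      intro w
      rw [wt]
      have h1 : ∀ i : Fin (s + 1), w.reverse.vert i.castSucc = w.vert i.rev.succ := by
        intro i
        show w.vert i.castSucc.rev = w.vert i.rev.succ
        rw [Fin.rev_castSucc]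
      calc ∏ i : Fin (s + 1), ((B (w.reverse.vert i.castSucc) : ℝ))⁻¹
          = ∏ i : Fin (s + 1), ((B (w.vert ((Fin.revPerm i : Fin (s+1))).succ) : ℝ))⁻¹ :=
            Finset.prod_congr rfl fun i _ => by rw [h1, Fin.revPerm_apply]
        _ = ∏ i : Fin (s + 1), ((B (w.vert i.succ) : ℝ))⁻¹ :=
            Equiv.prod_comp Fin.revPerm (fun i : Fin (s+1) => ((B (w.vert i.succ) : ℝ))⁻¹)
        _ = _ := Finset.prod_inv_distrib _
    -- pathwise product bound
    have hprod : ∀ w : G.Walk x y (s + 1),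
        (∏ i : Fin (s + 1), (F (w.vert i.castSucc) : ℝ)) *
        (∏ i : Fin (s + 1), (B (w.vert i.succ) : ℝ))
        ≤ ((Δ : ℝ) * ((Δ : ℝ) / 2) ^ s) ^ 2 := by
      intro w
      set vv : ℕ → V := fun i => w.vert ⟨min i (s + 1), by omega⟩ with hvv
      have hPfr : (∏ i : Fin (s + 1), (F (w.vert i.castSucc) : ℝ))
          = ∏ i ∈ Finset.range (s + 1), (F (vv i) : ℝ) := by
        rw [← Fin.prod_univ_eq_prod_range (fun i => (F (vv i) : ℝ)) (s + 1)]
        refine Finset.prod_congr rfl fun i _ => ?_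
        have hidx : vv i.val = w.vert i.castSucc := by
          rw [hvv]
          show w.vert _ = w.vert i.castSucc
          congr 1
          apply Fin.ext
          have := i.isLt
          simp only [Fin.coe_castSucc]
          omega
        rw [hidx]
      have hPbr : (∏ i : Fin (s + 1), (B (w.vert i.succ) : ℝ))
          = ∏ i ∈ Finset.range (s + 1), (B (vv (i + 1)) : ℝ) := by
        rw [← Fin.prod_univ_eq_prod_range (fun i => (B (vv (i + 1)) : ℝ)) (s + 1)]
        refine Finset.prod_congr rfl fun i _ => ?_
        have hidx : vv (i.val + 1) = w.vert i.succ := by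
          rw [hvv]
          show w.vert _ = w.vert i.succ
          congr 1
          apply Fin.ext
          have := i.isLt
          simp only [Fin.val_succ]
          omega
        rw [hidx]
      rw [hPfr, hPbr, Finset.prod_range_succ' (fun i => (F (vv i) : ℝ)) s,
        Finset.prod_range_succ (fun i => (B (vv (i + 1)) : ℝ)) s]
      have hmid : ∀ i ∈ Finset.range s, (F (vv (i + 1)) : ℝ) * (B (vv (i + 1)) : ℝ)
          ≤ ((Δ : ℝ) / 2) * ((Δ : ℝ) / 2) := fun i _ => mul_le_quarter_sq (hFB (vv (i + 1)))
      have hF0 : (F (vv 0) : ℝ) ≤ (Δ : ℝ) := by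
        have h5 : F (vv 0) ≤ Δ := le_trans (Nat.le_add_right _ _) (hFB (vv 0))
        exact_mod_cast h5
      have hBt : (B (vv (s + 1)) : ℝ) ≤ (Δ : ℝ) := by
        have h5 : B (vv (s + 1)) ≤ Δ := le_trans (Nat.le_add_left _ _) (hFB (vv (s + 1)))
        exact_mod_cast h5
      calc (∏ i ∈ Finset.range s, (F (vv (i + 1)) : ℝ)) * (F (vv 0) : ℝ) *
            ((∏ i ∈ Finset.range s, (B (vv (i + 1)) : ℝ)) * (B (vv (s + 1)) : ℝ))
          = ((F (vv 0) : ℝ) * (B (vv (s + 1)) : ℝ)) *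
            ∏ i ∈ Finset.range s, ((F (vv (i + 1)) : ℝ) * (B (vv (i + 1)) : ℝ)) := by
            rw [Finset.prod_mul_distrib]; ring
        _ ≤ ((Δ : ℝ) * (Δ : ℝ)) *
            ∏ _i ∈ Finset.range s, (((Δ : ℝ) / 2) * ((Δ : ℝ) / 2)) := by
            refine mul_le_mul (mul_le_mul hF0 hBt (by positivity) (by positivity))
              (Finset.prod_le_prod (fun i _ => by positivity) hmid)
              (Finset.prod_nonneg fun i _ => by positivity) (by positivity)
        _ = ((Δ : ℝ) * ((Δ : ℝ) / 2) ^ s) ^ 2 := by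
            rw [Finset.prod_const, Finset.card_range,
              show ((Δ : ℝ) / 2) * ((Δ : ℝ) / 2) = ((Δ : ℝ) / 2) ^ 2 by ring,
              ← pow_mul, mul_pow, ← pow_mul]
            ring
    -- positivity of products
    have hPfge1 : ∀ w : G.Walk x y (s + 1),
        (1 : ℝ) ≤ ∏ i : Fin (s + 1), (F (w.vert i.castSucc) : ℝ) := by
      intro w
      calc (1 : ℝ) = ∏ _i : Fin (s + 1), (1 : ℝ) := by simp
        _ ≤ _ := Finset.prod_le_prod (fun i _ => by norm_num)
            (fun i _ => by exact_mod_cast hF1 w i)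
    have hPbge1 : ∀ w : G.Walk x y (s + 1),
        (1 : ℝ) ≤ ∏ i : Fin (s + 1), (B (w.vert i.succ) : ℝ) := by
      intro w
      calc (1 : ℝ) = ∏ _i : Fin (s + 1), (1 : ℝ) := by simp
        _ ≤ _ := Finset.prod_le_prod (fun i _ => by norm_num)
            (fun i _ => by exact_mod_cast hB1 w i)
    have hΔR : (1 : ℝ) ≤ (Δ : ℝ) := by exact_mod_cast hΔ1
    have hCpos : 0 < (Δ : ℝ) * ((Δ : ℝ) / 2) ^ s := by
      have h0 : (0 : ℝ) < (Δ : ℝ) := by linarith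
      exact mul_pos h0 (pow_pos (by linarith) s)
    -- key pointwise inequality
    have hkey : ∀ w : G.Walk x y (s + 1),
        1 ≤ ((Δ : ℝ) * ((Δ : ℝ) / 2) ^ s) *
          (Real.sqrt (wt F (s + 1) w.vert) * Real.sqrt (wt B (s + 1) w.reverse.vert)) := by
      intro w
      rw [hwtF w, hrevwt w]
      have hp := hPfge1 w
      have hq := hPbge1 w
      have hpq := hprod w
      have h1 : Real.sqrt (∏ i : Fin (s + 1), (F (w.vert i.castSucc) : ℝ))⁻¹ *
          Real.sqrt (∏ i : Fin (s + 1), (B (w.vert i.succ) : ℝ))⁻¹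
          = Real.sqrt (((∏ i : Fin (s + 1), (F (w.vert i.castSucc) : ℝ)) *
            (∏ i : Fin (s + 1), (B (w.vert i.succ) : ℝ)))⁻¹) := by
        rw [mul_inv, Real.sqrt_mul (by positivity)]
      rw [h1]
      have h2 : ((((Δ : ℝ) * ((Δ : ℝ) / 2) ^ s)) ^ 2)⁻¹
          ≤ (((∏ i : Fin (s + 1), (F (w.vert i.castSucc) : ℝ)) *
            (∏ i : Fin (s + 1), (B (w.vert i.succ) : ℝ))))⁻¹ := by
        apply inv_anti₀ (by nlinarith) hpq
      have h3 := Real.sqrt_le_sqrt h2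
      rw [Real.sqrt_inv, Real.sqrt_sq hCpos.le] at h3
      calc (1 : ℝ) = ((Δ : ℝ) * ((Δ : ℝ) / 2) ^ s) * ((Δ : ℝ) * ((Δ : ℝ) / 2) ^ s)⁻¹ := by
            field_simp
        _ ≤ _ := mul_le_mul_of_nonneg_left h3 hCpos.le
    -- Cauchy–Schwarz
    have hcs : (∑ w : G.Walk x y (s + 1),
        Real.sqrt (wt F (s + 1) w.vert) * Real.sqrt (wt B (s + 1) w.reverse.vert)) ≤ 1 := by
      have h2 := Finset.sum_mul_sq_le_sq_mul_sq Finset.univ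
        (fun w : G.Walk x y (s + 1) => Real.sqrt (wt F (s + 1) w.vert))
        (fun w : G.Walk x y (s + 1) => Real.sqrt (wt B (s + 1) w.reverse.vert))
      have ha : ∑ w : G.Walk x y (s + 1), (Real.sqrt (wt F (s + 1) w.vert)) ^ 2
          = ∑ w : G.Walk x y (s + 1), wt F (s + 1) w.vert :=
        Finset.sum_congr rfl fun w _ => Real.sq_sqrt (wt_nonneg _ _ _)
      have hb : ∑ w : G.Walk x y (s + 1), (Real.sqrt (wt B (s + 1) w.reverse.vert)) ^ 2
          = ∑ w : G.Walk x y (s + 1), wt B (s + 1) w.reverse.vert :=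
        Finset.sum_congr rfl fun w _ => Real.sq_sqrt (wt_nonneg _ _ _)
      rw [ha, hb] at h2
      have hFnn : (0 : ℝ) ≤ ∑ w : G.Walk x y (s + 1), wt F (s + 1) w.vert :=
        Finset.sum_nonneg fun w _ => wt_nonneg _ _ _
      have hBnn : (0 : ℝ) ≤ ∑ w : G.Walk x y (s + 1), wt B (s + 1) w.reverse.vert :=
        Finset.sum_nonneg fun w _ => wt_nonneg _ _ _
      have hsq : (∑ w : G.Walk x y (s + 1),
          Real.sqrt (wt F (s + 1) w.vert) * Real.sqrt (wt B (s + 1) w.reverse.vert)) ^ 2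
          ≤ 1 := by nlinarith [hflowF, hflowB]
      have hnn : 0 ≤ ∑ w : G.Walk x y (s + 1),
          Real.sqrt (wt F (s + 1) w.vert) * Real.sqrt (wt B (s + 1) w.reverse.vert) :=
        Finset.sum_nonneg fun w _ => mul_nonneg (Real.sqrt_nonneg _) (Real.sqrt_nonneg _)
      nlinarith
    -- conclusion
    have hNle : (Fintype.card (G.Walk x y (s + 1)) : ℝ) ≤ (Δ : ℝ) * ((Δ : ℝ) / 2) ^ s := by
      have h4 : (Fintype.card (G.Walk x y (s + 1)) : ℝ)
          = ∑ _w : G.Walk x y (s + 1), (1 : ℝ) := by simp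
      rw [h4]
      calc ∑ _w : G.Walk x y (s + 1), (1 : ℝ)
          ≤ ∑ w : G.Walk x y (s + 1), ((Δ : ℝ) * ((Δ : ℝ) / 2) ^ s) *
            (Real.sqrt (wt F (s + 1) w.vert) * Real.sqrt (wt B (s + 1) w.reverse.vert)) :=
            Finset.sum_le_sum fun w _ => hkey w
        _ = ((Δ : ℝ) * ((Δ : ℝ) / 2) ^ s) * ∑ w : G.Walk x y (s + 1),
            Real.sqrt (wt F (s + 1) w.vert) * Real.sqrt (wt B (s + 1) w.reverse.vert) := by
            rw [Finset.mul_sum]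
        _ ≤ ((Δ : ℝ) * ((Δ : ℝ) / 2) ^ s) * 1 :=
            mul_le_mul_of_nonneg_left hcs hCpos.le
        _ = (Δ : ℝ) * ((Δ : ℝ) / 2) ^ s := mul_one _
    calc (Fintype.card (G.Walk x y (s + 1)) : ℝ) ≤ (Δ : ℝ) * ((Δ : ℝ) / 2) ^ s := hNle
      _ = 2 * ((Δ : ℝ) / 2) ^ (s + 1) := by rw [pow_succ]; ring



/-- In a multigraph of maximum degree at most Δ, the number of
shortest paths between vertices at distance t is at most 2 · (Δ/2)^t. -/
theorem numShortestPaths_le_two_mul_half_pow {V E : Type} [Fintype V] [Fintype E]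
    (G : Multigraph V E) (Δ : ℕ) (hΔ1 : 1 ≤ Δ) (hΔ : ∀ v : V, G.degree v ≤ Δ)
    (x y : V) (t : ℕ) (ht : G.dist x y = t) :
    (G.numShortestPaths x y : ℝ) ≤ 2 * ((Δ : ℝ) / 2) ^ t := by
  have h := numShortestPaths_le_two_mul_half_pow_aux G Δ hΔ1 hΔ x y t ht
  simpa [Multigraph.numShortestPaths] using h
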